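/- In the free group F on two generators a, b, the subgroup generated by {a⁴, b⁴, (ab)², a²ba, a²b²} equals the kernel of the group homomorphism χ : F → ℤ/4ℤ determined by χ(a) = 1 and χ(b) = 1. Equivalently, an element with abelianized image m[a] + n[b] lies in this subgroup if and only if m + n ≡ 0 (mod 4). -/
import Mathlib

private def Fa : FreeGroup (Fin 2) := FreeGroup.of 0
private def Fb : FreeGroup (Fin 2) := FreeGroup.of 1

private def Sset : Set (FreeGroup (Fin 2)) :=
  {Fa ^ 4, Fb ^ 4, (Fa * Fb) ^ 2, Fa ^ 2 * Fb * Fa, Fa ^ 2 * Fb ^ 2}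

private def T : Subgroup (FreeGroup (Fin 2)) := Subgroup.closure Sset

private def chi : FreeGroup (Fin 2) →* Multiplicative (ZMod 4) :=
  FreeGroup.lift (fun _ : Fin 2 => Multiplicative.ofAdd (1 : ZMod 4))

private lemma h0_mem : Fa ^ 4 ∈ T := Subgroup.subset_closure (by left; rfl)
private lemma h1_mem : Fb ^ 4 ∈ T :=
  Subgroup.subset_closure (by right; left; rfl)
private lemma h2_mem : (Fa * Fb) ^ 2 ∈ T :=
  Subgroup.subset_closure (by right; right; left; rfl)
private lemma h3_mem : Fa ^ 2 * Fb * Fa ∈ T :=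
  Subgroup.subset_closure (by right; right; right; left; rfl)
private lemma h4_mem : Fa ^ 2 * Fb ^ 2 ∈ T :=
  Subgroup.subset_closure (by right; right; right; right; rfl)

private lemma w0_mem : Fb * Fa⁻¹ ∈ T := by
  have h : Fb * Fa⁻¹ =
      Fb ^ 4 * (Fa ^ 2 * Fb ^ 2)⁻¹ * Fa ^ 4 * (Fa ^ 2 * Fb * Fa)⁻¹ *
        (Fa ^ 2 * Fb ^ 2) * ((Fa * Fb) ^ 2)⁻¹ := by simp only [Fa, Fb]; decide
  rw [h]
  exact mul_mem (mul_mem (mul_mem (mul_mem (mul_mem h1_mem (inv_mem h4_mem))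
    h0_mem) (inv_mem h3_mem)) h4_mem) (inv_mem h2_mem)

private lemma w1_mem : Fa * Fb * (Fa ^ 2)⁻¹ ∈ T := by
  have h : Fa * Fb * (Fa ^ 2)⁻¹ =
      (Fa * Fb) ^ 2 * (Fa ^ 2 * Fb ^ 2)⁻¹ * (Fa ^ 2 * Fb * Fa) * (Fa ^ 4)⁻¹ := by
    simp only [Fa, Fb]; decide
  rw [h]
  exact mul_mem (mul_mem (mul_mem h2_mem (inv_mem h4_mem)) h3_mem) (inv_mem h0_mem)

private lemma w2_mem : Fa ^ 2 * Fb * (Fa ^ 3)⁻¹ ∈ T := by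
  have h : Fa ^ 2 * Fb * (Fa ^ 3)⁻¹ = (Fa ^ 2 * Fb * Fa) * (Fa ^ 4)⁻¹ := by group
  rw [h]
  exact mul_mem h3_mem (inv_mem h0_mem)

private lemma w3_mem : Fa ^ 3 * Fb ∈ T := by
  have h : Fa ^ 3 * Fb = Fa ^ 4 * (Fa ^ 2 * Fb * Fa)⁻¹ * (Fa ^ 2 * Fb ^ 2) := by
    group
  rw [h]
  exact mul_mem (mul_mem h0_mem (inv_mem h3_mem)) h4_mem

private lemma chi_Fa : chi Fa = Multiplicative.ofAdd 1 := FreeGroup.lift_apply_of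
private lemma chi_Fb : chi Fb = Multiplicative.ofAdd 1 := FreeGroup.lift_apply_of

/-- the value of chi as a natural number in 0..3 -/
private def kv (g : FreeGroup (Fin 2)) : ℕ := (Multiplicative.toAdd (chi g)).val

private lemma kv_mul (g x : FreeGroup (Fin 2)) :
    kv (g * x) = ((Multiplicative.toAdd (chi g)) + Multiplicative.toAdd (chi x)).val := by
  unfold kv; rw [map_mul]; rfl

private lemma step (g x : FreeGroup (Fin 2))
    (hx : x = Fa ∨ x = Fa⁻¹ ∨ x = Fb ∨ x = Fb⁻¹)
    (ih : g * (Fa ^ kv g)⁻¹ ∈ T) :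
    g * x * (Fa ^ kv (g * x))⁻¹ ∈ T := by
  have hval : ∀ z : ZMod 4, z = 0 ∨ z = 1 ∨ z = 2 ∨ z = 3 := by decide
  have hta : Multiplicative.toAdd (chi Fa) = 1 := by rw [chi_Fa]; rfl
  have htb : Multiplicative.toAdd (chi Fb) = 1 := by rw [chi_Fb]; rfl
  have htai : Multiplicative.toAdd (chi Fa⁻¹) = -1 := by
    rw [map_inv, chi_Fa]; rfl
  have htbi : Multiplicative.toAdd (chi Fb⁻¹) = -1 := by
    rw [map_inv, chi_Fb]; rfl
  rcases hval (Multiplicative.toAdd (chi g)) with hz | hz | hz | hz <;>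
    [ (have hc : kv g = 0 := by unfold kv; rw [hz]; rfl);
      (have hc : kv g = 1 := by unfold kv; rw [hz]; rfl);
      (have hc : kv g = 2 := by unfold kv; rw [hz]; rfl);
      (have hc : kv g = 3 := by unfold kv; rw [hz]; rfl) ] <;>
  rw [hc] at ih <;>
  rcases hx with rfl | rfl | rfl | rfl
  -- z = 0
  · have hc' : kv (g * Fa) = 1 := by rw [kv_mul, hz, hta]; rfl
    rw [hc']
    have he : g * Fa * (Fa ^ 1)⁻¹ = g * (Fa ^ 0)⁻¹ * 1 := by group
    rw [he]; exact mul_mem ih (one_mem T)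
  · have hc' : kv (g * Fa⁻¹) = 3 := by rw [kv_mul, hz, htai]; rfl
    rw [hc']
    have he : g * Fa⁻¹ * (Fa ^ 3)⁻¹ = g * (Fa ^ 0)⁻¹ * (Fa ^ 4)⁻¹ := by group
    rw [he]; exact mul_mem ih (inv_mem h0_mem)
  · have hc' : kv (g * Fb) = 1 := by rw [kv_mul, hz, htb]; rfl
    rw [hc']
    have he : g * Fb * (Fa ^ 1)⁻¹ = g * (Fa ^ 0)⁻¹ * (Fb * Fa⁻¹) := by group
    rw [he]; exact mul_mem ih w0_mem
  · have hc' : kv (g * Fb⁻¹) = 3 := by rw [kv_mul, hz, htbi]; rfl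
    rw [hc']
    have he : g * Fb⁻¹ * (Fa ^ 3)⁻¹ = g * (Fa ^ 0)⁻¹ * (Fa ^ 3 * Fb)⁻¹ := by group
    rw [he]; exact mul_mem ih (inv_mem w3_mem)
  -- z = 1
  · have hc' : kv (g * Fa) = 2 := by rw [kv_mul, hz, hta]; rfl
    rw [hc']
    have he : g * Fa * (Fa ^ 2)⁻¹ = g * (Fa ^ 1)⁻¹ * 1 := by group
    rw [he]; exact mul_mem ih (one_mem T)
  · have hc' : kv (g * Fa⁻¹) = 0 := by rw [kv_mul, hz, htai]; rfl
    rw [hc']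
    have he : g * Fa⁻¹ * (Fa ^ 0)⁻¹ = g * (Fa ^ 1)⁻¹ * 1 := by group
    rw [he]; exact mul_mem ih (one_mem T)
  · have hc' : kv (g * Fb) = 2 := by rw [kv_mul, hz, htb]; rfl
    rw [hc']
    have he : g * Fb * (Fa ^ 2)⁻¹ = g * (Fa ^ 1)⁻¹ * (Fa * Fb * (Fa ^ 2)⁻¹) := by
      group
    rw [he]; exact mul_mem ih w1_mem
  · have hc' : kv (g * Fb⁻¹) = 0 := by rw [kv_mul, hz, htbi]; rfl
    rw [hc']
    have he : g * Fb⁻¹ * (Fa ^ 0)⁻¹ = g * (Fa ^ 1)⁻¹ * (Fb * Fa⁻¹)⁻¹ := by group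
    rw [he]; exact mul_mem ih (inv_mem w0_mem)
  -- z = 2
  · have hc' : kv (g * Fa) = 3 := by rw [kv_mul, hz, hta]; rfl
    rw [hc']
    have he : g * Fa * (Fa ^ 3)⁻¹ = g * (Fa ^ 2)⁻¹ * 1 := by group
    rw [he]; exact mul_mem ih (one_mem T)
  · have hc' : kv (g * Fa⁻¹) = 1 := by rw [kv_mul, hz, htai]; rfl
    rw [hc']
    have he : g * Fa⁻¹ * (Fa ^ 1)⁻¹ = g * (Fa ^ 2)⁻¹ * 1 := by group
    rw [he]; exact mul_mem ih (one_mem T)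
  · have hc' : kv (g * Fb) = 3 := by rw [kv_mul, hz, htb]; rfl
    rw [hc']
    have he : g * Fb * (Fa ^ 3)⁻¹ = g * (Fa ^ 2)⁻¹ * (Fa ^ 2 * Fb * (Fa ^ 3)⁻¹) := by
      group
    rw [he]; exact mul_mem ih w2_mem
  · have hc' : kv (g * Fb⁻¹) = 1 := by rw [kv_mul, hz, htbi]; rfl
    rw [hc']
    have he : g * Fb⁻¹ * (Fa ^ 1)⁻¹ = g * (Fa ^ 2)⁻¹ * (Fa * Fb * (Fa ^ 2)⁻¹)⁻¹ := by
      group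
    rw [he]; exact mul_mem ih (inv_mem w1_mem)
  -- z = 3
  · have hc' : kv (g * Fa) = 0 := by rw [kv_mul, hz, hta]; rfl
    rw [hc']
    have he : g * Fa * (Fa ^ 0)⁻¹ = g * (Fa ^ 3)⁻¹ * Fa ^ 4 := by group
    rw [he]; exact mul_mem ih h0_mem
  · have hc' : kv (g * Fa⁻¹) = 2 := by rw [kv_mul, hz, htai]; rfl
    rw [hc']
    have he : g * Fa⁻¹ * (Fa ^ 2)⁻¹ = g * (Fa ^ 3)⁻¹ * 1 := by group
    rw [he]; exact mul_mem ih (one_mem T)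
  · have hc' : kv (g * Fb) = 0 := by rw [kv_mul, hz, htb]; rfl
    rw [hc']
    have he : g * Fb * (Fa ^ 0)⁻¹ = g * (Fa ^ 3)⁻¹ * (Fa ^ 3 * Fb) := by group
    rw [he]; exact mul_mem ih w3_mem
  · have hc' : kv (g * Fb⁻¹) = 2 := by rw [kv_mul, hz, htbi]; rfl
    rw [hc']
    have he : g * Fb⁻¹ * (Fa ^ 2)⁻¹ = g * (Fa ^ 3)⁻¹ * (Fa ^ 2 * Fb * (Fa ^ 3)⁻¹)⁻¹ := by
      group
    rw [he]; exact mul_mem ih (inv_mem w2_mem)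

private lemma key (g : FreeGroup (Fin 2)) : g * (Fa ^ kv g)⁻¹ ∈ T := by
  obtain ⟨L, rfl⟩ : ∃ L, FreeGroup.mk L = g := ⟨g.toWord, FreeGroup.mk_toWord⟩
  induction L using List.reverseRecOn with
  | nil =>
      have h1 : FreeGroup.mk ([] : List (Fin 2 × Bool)) = 1 := rfl
      rw [h1]
      have hk : kv (1 : FreeGroup (Fin 2)) = 0 := by
        unfold kv; rw [map_one]; rfl
      rw [hk]
      simpa using one_mem T
  | append_singleton L x ih =>
      obtain ⟨i, bb⟩ := x
      rw [← FreeGroup.mul_mk]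
      apply step _ _ _ ih
      have h2 : FreeGroup.mk [(i, false)] = (FreeGroup.of i)⁻¹ := rfl
      fin_cases i <;> cases bb
      · right; left; rw [h2]; rfl
      · left; rfl
      · right; right; right; rw [h2]; rfl
      · right; right; left; rfl

theorem stmt_4 :
    let a : FreeGroup (Fin 2) := FreeGroup.of 0
    let b : FreeGroup (Fin 2) := FreeGroup.of 1
    Subgroup.closure
        ({a ^ 4, b ^ 4, (a * b) ^ 2, a ^ 2 * b * a,
          a ^ 2 * b ^ 2} : Set (FreeGroup (Fin 2))) =
      (FreeGroup.lift
        (fun _ : Fin 2 => Multiplicative.ofAdd (1 : ZMod 4))).ker := by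
  intro a b
  show T = chi.ker
  apply le_antisymm
  · rw [T, Subgroup.closure_le]
    rintro x (rfl | rfl | rfl | rfl | rfl) <;>
      simp only [SetLike.mem_coe, MonoidHom.mem_ker, map_mul, map_pow,
        chi_Fa, chi_Fb] <;> decide
  · intro g hg
    have hk : kv g = 0 := by
      unfold kv
      rw [MonoidHom.mem_ker.mp hg]
      rfl
    have h := key g
    rw [hk] at h
    simpa using h
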